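/- Let r be a square root on a pseudo MV-algebra M = Γ(G,u). Then r(0) ⊙ x = x ⊙ r(0) for every x ∈ M. -/

import Mathlib

section Core

variable {G : Type} [Lattice G] [AddGroup G]

/-- `u` is a strong unit of the ℓ-group `G`. -/
def IsStrongUnit (u : G) : Prop :=
  0 ≤ u ∧ ∀ g : G, ∃ n : ℕ, 1 ≤ n ∧ g ≤ n • u

/-- Truncated addition `x ⊕ y = (x + y) ⊓ u` of the pseudo MV-algebra `Γ(G,u)`. -/
def oplus (u x y : G) : G := (x + y) ⊓ u

/-- Left negation `x⁻ = u - x`. -/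
def negl (u x : G) : G := u - x

/-- Right negation `x~ = -x + u`. -/
def negr (u x : G) : G := -x + u

/-- `x ⊙ y = (x - u + y) ⊔ 0`. -/
def odot (u x y : G) : G := (x - u + y) ⊔ 0

/-- `r` is a square root on the pseudo MV-algebra `M = Γ(G,u)`:
it maps `M` to `M` and satisfies (Sq1), (Sq2), (Sq3). -/
def IsSquareRoot (u : G) (r : G → G) : Prop :=
  (∀ x, 0 ≤ x → x ≤ u → 0 ≤ r x ∧ r x ≤ u) ∧
  (∀ x, 0 ≤ x → x ≤ u → odot u (r x) (r x) = x) ∧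
  (∀ x y, 0 ≤ x → x ≤ u → 0 ≤ y → y ≤ u → odot u y y ≤ x → y ≤ r x) ∧
  (∀ x, 0 ≤ x → x ≤ u → r (negl u x) = oplus u (negl u (r x)) (r 0)) ∧
  (∀ x, 0 ≤ x → x ≤ u → r (negr u x) = oplus u (r 0) (negr u (r x)))

/-- `r` is strict: `r 0 = r 0⁻`. -/
def IsStrict (u : G) (r : G → G) : Prop := r 0 = negl u (r 0)

end Core

/-- An additive structure is two-divisible if every element is `h + h` for some `h`. -/
def TwoDivisible (A : Type) [Add A] : Prop := ∀ g : A, ∃ h : A, h + h = g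

set_option linter.unusedSectionVars false
set_option linter.unusedVariables false

section SQ15
variable {G : Type} [Lattice G] [AddGroup G]
  [CovariantClass G G (· + ·) (· ≤ ·)]
  [CovariantClass G G (Function.swap (· + ·)) (· ≤ ·)]

private lemma sq15_neg_le {a b : G} (h : a ≤ b) : -b ≤ -a := by
  have h1 := add_le_add_left h (-b)
  have h2 := add_le_add_right h1 (-a)
  simpa [add_assoc] using h2

private lemma sq15_basic (u : G) (r : G → G) (hu0 : (0:G) ≤ u) (hr : IsSquareRoot u r) :
    0 ≤ r 0 ∧ r 0 ≤ u ∧ r 0 + -u + r 0 ≤ 0 ∧ r 0 + r 0 ≤ u := by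
  obtain ⟨hrg, hsq1, -, -, -⟩ := hr
  obtain ⟨hv0, hvu⟩ := hrg 0 le_rfl hu0
  have h0 := hsq1 0 le_rfl hu0
  rw [odot] at h0
  have hvv : r 0 - u + r 0 ≤ 0 := sup_eq_right.mp h0
  rw [sub_eq_add_neg] at hvv
  have h1 : r 0 + -u ≤ -(r 0) := by
    have := add_le_add_right hvv (-(r 0)); simpa [add_assoc] using this
  have h2 : r 0 ≤ -(r 0) + u := by
    have := add_le_add_left h1 u; simpa [add_assoc] using this
  have h3 : r 0 + r 0 ≤ u := by
    have := add_le_add_left h2 (r 0); simpa using this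
  exact ⟨hv0, hvu, hvv, h3⟩

/-- For `X ∈ [0, r 0]` we have `r X = r 0 + h` where `h + h = X`. -/
private lemma sq15_half (u : G) (r : G → G) (hu0 : (0:G) ≤ u) (hr : IsSquareRoot u r)
    (X : G) (hX0 : 0 ≤ X) (hXv : X ≤ r 0) :
    ∃ h : G, 0 ≤ h ∧ h ≤ r 0 ∧ h + h = X ∧ r X = r 0 + h := by
  obtain ⟨hv0, hvu, hvv, hvvu⟩ := sq15_basic u r hu0 hr
  obtain ⟨hrg, hsq1, hsq2, hsq3l, hsq3r⟩ := hr
  set v := r 0 with hv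
  have hXu : X ≤ u := hXv.trans hvu
  obtain ⟨hm0, hmu⟩ := hrg X hX0 hXu
  set m := r X with hm
  -- v ≤ m
  have hvm : v ≤ m := by
    refine hsq2 X v hX0 hXu hv0 hvu ?_
    rw [odot, sub_eq_add_neg]
    exact sup_le (hvv.trans hX0) hX0
  -- bounds for negl u X
  have hnl0 : (0:G) ≤ negl u X := by
    rw [negl, sub_eq_add_neg]
    have := add_le_add_right hXu (-X); simpa using this
  have hnlu : negl u X ≤ u := by
    rw [negl, sub_eq_add_neg]
    have hnX : -X ≤ 0 := by have := add_le_add_left hX0 (-X); simpa using this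
    have := add_le_add_left hnX u; simpa using this
  -- r (negl u X) = u + -m + v
  have hrnl : r (negl u X) = u + -m + v := by
    rw [hsq3l X hX0 hXu]
    simp only [oplus, negl, sub_eq_add_neg, ← hv, ← hm]
    refine inf_eq_left.mpr ?_
    have h1 : -m + v ≤ 0 := by have := add_le_add_left hvm (-m); simpa using this
    have := add_le_add_left h1 u
    simpa [add_assoc] using this
  -- w' := u + -v ≤ r (negl u X)
  have hw'0 : (0:G) ≤ u + -v := by
    have := add_le_add_right hvu (-v); simpa using this
  have hw'u : u + -v ≤ u := by
    have hnv : -v ≤ 0 := by have := add_le_add_left hv0 (-v); simpa using this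
    have := add_le_add_left hnv u; simpa using this
  have hXvv : X ≤ v + v := hXv.trans (by have := add_le_add_right hv0 v; simpa using this)
  have hw'le : u + -v ≤ r (negl u X) := by
    refine hsq2 (negl u X) (u + -v) hnl0 hnlu hw'0 hw'u ?_
    have hin : (u + -v) - u + (u + -v) = u + (-v + -v) := by
      simp only [sub_eq_add_neg, add_assoc, neg_add_cancel_left, add_neg_cancel_left]
    rw [odot, hin, negl, sub_eq_add_neg]
    have h2 : -v + -v ≤ -X := by
      have : -(v + v) ≤ -X := sq15_neg_le hXvv
      rwa [neg_add_rev] at this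
    have h3 : u + (-v + -v) ≤ u + -X := add_le_add_right h2 u
    refine sup_le h3 ?_
    have := add_le_add_right hXu (-X); simpa using this
  -- m ≤ v + v
  have hm2v : m ≤ v + v := by
    rw [hrnl] at hw'le
    have h1 : -v ≤ -m + v := by
      have := hw'le
      rw [add_assoc] at this
      exact le_of_add_le_add_left this
    have h2 : m + -v ≤ v := by
      have := add_le_add_left h1 m; simpa [add_neg_cancel_left] using this
    have := add_le_add_right h2 v; simpa [add_assoc] using this
  -- Sq1 at negl u X gives (a + a) ⊔ -u = -X for a := -m + v
  have hkey : ((-m + v) + (-m + v)) ⊔ (-u) = -X := by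
    have h0 := hsq1 (negl u X) hnl0 hnlu
    rw [hrnl, odot] at h0
    have hin : (u + -m + v) - u + (u + -m + v) = u + ((-m + v) + (-m + v)) := by
      simp only [sub_eq_add_neg, add_assoc, neg_add_cancel_left, add_neg_cancel_left]
    rw [hin] at h0
    have h1 : u + (((-m + v) + (-m + v)) ⊔ (-u)) = u + -X := by
      rw [add_sup]
      simpa [negl, sub_eq_add_neg] using h0
    exact add_left_cancel h1
  have ha : -v ≤ -m + v := by
    have h1 : -(v+v) ≤ -m := sq15_neg_le hm2v
    have h2 := add_le_add_right h1 v
    rw [neg_add_rev] at h2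
    simpa [add_assoc] using h2
  have haa : -u ≤ (-m + v) + (-m + v) := by
    have h1 : -u ≤ -(v + v) := sq15_neg_le hvvu
    have h2 : -(v+v) ≤ (-m + v) + (-m + v) := by
      rw [neg_add_rev]
      exact add_le_add ha ha
    exact h1.trans h2
  have haaX : (-m + v) + (-m + v) = -X := by
    rw [← hkey, sup_eq_left.mpr haa]
  -- h := -v + m
  refine ⟨-v + m, ?_, ?_, ?_, ?_⟩
  · have := add_le_add_left hvm (-v); simpa using this
  · have := add_le_add_left hm2v (-v); simpa [add_assoc, neg_add_cancel_left] using this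
  · have h1 : -((-m + v) + (-m + v)) = X := by rw [haaX, neg_neg]
    rw [neg_add_rev, neg_add_rev, neg_neg] at h1
    simpa [add_assoc] using h1
  · exact (add_neg_cancel_left v m).symm

/-- Every `c ∈ [0, r 0]` commutes with `r 0`. -/
private lemma sq15_comm_v (u : G) (r : G → G) (hu0 : (0:G) ≤ u) (hr : IsSquareRoot u r)
    (c : G) (hc0 : 0 ≤ c) (hcv : c ≤ r 0) : c + r 0 = r 0 + c := by
  obtain ⟨hv0, hvu, hvv, hvvu⟩ := sq15_basic u r hu0 hr
  obtain ⟨hrg, hsq1, hsq2, hsq3l, hsq3r⟩ := hr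
  set v := r 0 with hv
  have hcu : c ≤ u := hcv.trans hvu
  have hcc0 : (0:G) ≤ c + c := by have := add_le_add hc0 hc0; simpa using this
  have hccu : c + c ≤ u := (add_le_add hcv hcv).trans hvvu
  set s := r (c + c) with hs
  have hvs : v ≤ s := by
    refine hsq2 (c+c) v hcc0 hccu hv0 hvu ?_
    rw [odot, sub_eq_add_neg]
    exact sup_le (hvv.trans hcc0) hcc0
  -- bounds for negl and negr of c + c
  have hneg0 : -(c+c) ≤ 0 := by
    have hn := add_le_add_right hcc0 (-(c+c)); rwa [add_zero, neg_add_cancel] at hn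
  have hnl0 : (0:G) ≤ negl u (c+c) := by
    rw [negl, sub_eq_add_neg]
    have h := add_le_add_left hccu (-(c+c)); rwa [add_neg_cancel] at h
  have hnlu : negl u (c+c) ≤ u := by
    rw [negl, sub_eq_add_neg]
    have h := add_le_add_right hneg0 u; rwa [add_zero] at h
  have hnr0 : (0:G) ≤ negr u (c+c) := by
    rw [negr]
    have h := add_le_add_right hccu (-(c+c)); rwa [neg_add_cancel] at h
  have hnru : negr u (c+c) ≤ u := by
    rw [negr]
    have h := add_le_add_left hneg0 u; rwa [zero_add] at h
  -- sq3 values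
  have hrnl : r (negl u (c+c)) = u + -s + v := by
    rw [hsq3l (c+c) hcc0 hccu]
    simp only [oplus, negl, sub_eq_add_neg, ← hv, ← hs]
    refine inf_eq_left.mpr ?_
    have h1 : -s + v ≤ 0 := by have := add_le_add_left hvs (-s); simpa using this
    have := add_le_add_left h1 u
    simpa [add_assoc] using this
  have hrnr : r (negr u (c+c)) = v + -s + u := by
    rw [hsq3r (c+c) hcc0 hccu]
    simp only [oplus, negr, ← hv, ← hs]
    have he : v + (-s + u) = v + -s + u := (add_assoc v (-s) u).symm
    rw [he]
    refine inf_eq_left.mpr ?_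
    have h1 : v + -s ≤ 0 := by have := add_le_add_right hvs (-s); simpa using this
    have := add_le_add_right h1 u; simpa using this
  -- upper bound 1 : s ≤ v + c
  have hsvc : s ≤ v + c := by
    have hy0 : (0:G) ≤ u + -c := by
      have := add_le_add_right hcu (-c); simpa using this
    have hyu : u + -c ≤ u := by
      have hn : -c ≤ 0 := by have := add_le_add_left hc0 (-c); simpa using this
      have := add_le_add_left hn u; simpa using this
    have hyle : u + -c ≤ r (negl u (c+c)) := by
      refine hsq2 (negl u (c+c)) (u + -c) hnl0 hnlu hy0 hyu ?_
      have hin : (u + -c) - u + (u + -c) = u + (-c + -c) := by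
        simp only [sub_eq_add_neg, add_assoc, neg_add_cancel_left, add_neg_cancel_left]
      rw [odot, hin, negl, sub_eq_add_neg, neg_add_rev]
      exact sup_le le_rfl (by have := add_le_add_left hccu (-(c+c)); simpa [neg_add_rev, add_assoc] using this)
    rw [hrnl] at hyle
    have h1 : -c ≤ -s + v := by
      rw [add_assoc] at hyle
      exact le_of_add_le_add_left hyle
    have h2 : s + -c ≤ v := by
      have := add_le_add_left h1 s; simpa [add_neg_cancel_left] using this
    have := add_le_add_right h2 c; simpa [add_assoc] using this
  -- upper bound 2 : s ≤ c + v
  have hscv : s ≤ c + v := by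
    have hy0 : (0:G) ≤ -c + u := by
      have := add_le_add_left hcu (-c); simpa using this
    have hyu : -c + u ≤ u := by
      have hn : -c ≤ 0 := by have := add_le_add_left hc0 (-c); simpa using this
      have := add_le_add_right hn u; simpa using this
    have hyle : -c + u ≤ r (negr u (c+c)) := by
      refine hsq2 (negr u (c+c)) (-c + u) hnr0 hnru hy0 hyu ?_
      have hin : (-c + u) - u + (-c + u) = -c + (-c + u) := by
        simp only [sub_eq_add_neg, add_assoc, neg_add_cancel_left, add_neg_cancel_left]
      rw [odot, hin, negr, neg_add_rev]
      rw [add_assoc]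
      exact sup_le le_rfl (by have := add_le_add_right hccu (-(c+c)); simpa [neg_add_rev, add_assoc] using this)
    rw [hrnr] at hyle
    have h1 : -c ≤ v + -s := le_of_add_le_add_right hyle
    have h2 : -c + s ≤ v := by
      have := add_le_add_right h1 s; simpa [add_assoc] using this
    have := add_le_add_left h2 c; simpa [add_neg_cancel_left] using this
  -- Eq 1 : s = v + c
  have hs1 : s = v + c := by
    have hkey : ((-s + v) + (-s + v)) ⊔ (-u) = -(c+c) := by
      have h0 := hsq1 (negl u (c+c)) hnl0 hnlu
      rw [hrnl, odot] at h0
      have hin : (u + -s + v) - u + (u + -s + v) = u + ((-s + v) + (-s + v)) := by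
        simp only [sub_eq_add_neg, add_assoc, neg_add_cancel_left, add_neg_cancel_left]
      rw [hin] at h0
      have h1 : u + (((-s + v) + (-s + v)) ⊔ (-u)) = u + -(c+c) := by
        rw [add_sup]
        simpa [negl, sub_eq_add_neg] using h0
      exact add_left_cancel h1
    have ha : -c ≤ -s + v := by
      have h1 : -(v+c) ≤ -s := sq15_neg_le hsvc
      have h2 := add_le_add_right h1 v
      rw [neg_add_rev] at h2
      simpa [add_assoc] using h2
    have haa : -u ≤ (-s + v) + (-s + v) := by
      have h1 : -u ≤ -(c+c) := sq15_neg_le hccu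
      have h2 : -(c+c) ≤ (-s + v) + (-s + v) := by
        rw [neg_add_rev]
        exact add_le_add ha ha
      exact h1.trans h2
    have haaX : (-s + v) + (-s + v) = -(c+c) := by
      rw [← hkey, sup_eq_left.mpr haa]
    have hqq : (-v + s) + (-v + s) = c + c := by
      have h1 : -((-s + v) + (-s + v)) = c + c := by rw [haaX, neg_neg]
      rw [neg_add_rev, neg_add_rev, neg_neg] at h1
      simpa [add_assoc] using h1
    have hqc : -v + s ≤ c := by
      have := add_le_add_left hsvc (-v); simpa [neg_add_cancel_left] using this
    have hq : -v + s = c := by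
      have h1 : (-v + s) + (-v + s) ≤ (-v + s) + c := add_le_add_right hqc _
      have h2 : (-v + s) + c ≤ c + c := add_le_add_left hqc c
      have h3 : (-v + s) + c = c + c := le_antisymm h2 (by rw [← hqq]; exact h1)
      exact add_right_cancel h3
    have := congrArg (fun t => v + t) hq
    simpa [add_neg_cancel_left] using this
  -- Eq 2 : s = c + v
  have hs2 : s = c + v := by
    have hkey : ((v + -s) + (v + -s)) ⊔ (-u) = -(c+c) := by
      have h0 := hsq1 (negr u (c+c)) hnr0 hnru
      rw [hrnr, odot] at h0
      have hin : (v + -s + u) - u + (v + -s + u) = ((v + -s) + (v + -s)) + u := by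
        simp only [sub_eq_add_neg, add_assoc, neg_add_cancel_left, add_neg_cancel_left]
      rw [hin] at h0
      have h1 : (((v + -s) + (v + -s)) ⊔ (-u)) + u = -(c+c) + u := by
        rw [sup_add]
        simpa [negr] using h0
      exact add_right_cancel h1
    have hb : -c ≤ v + -s := by
      have h1 : -(c+v) ≤ -s := sq15_neg_le hscv
      have h2 := add_le_add_right h1 v
      rw [neg_add_rev] at h2
      simpa [add_neg_cancel_left] using h2
    have hbb : -u ≤ (v + -s) + (v + -s) := by
      have h1 : -u ≤ -(c+c) := sq15_neg_le hccu
      have h2 : -(c+c) ≤ (v + -s) + (v + -s) := by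
        rw [neg_add_rev]
        exact add_le_add hb hb
      exact h1.trans h2
    have hbbX : (v + -s) + (v + -s) = -(c+c) := by
      rw [← hkey, sup_eq_left.mpr hbb]
    have hpp : (s + -v) + (s + -v) = c + c := by
      have h1 : -((v + -s) + (v + -s)) = c + c := by rw [hbbX, neg_neg]
      rw [neg_add_rev, neg_add_rev, neg_neg] at h1
      simpa [add_assoc] using h1
    have hpc : s + -v ≤ c := by
      have := add_le_add_right hscv (-v); simpa [add_assoc] using this
    have hp : s + -v = c := by
      have h1 : (s + -v) + (s + -v) ≤ c + (s + -v) := add_le_add_left hpc _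
      have h2 : c + (s + -v) ≤ c + c := add_le_add_right hpc c
      have h3 : c + (s + -v) = c + c := le_antisymm h2 (by rw [← hpp]; exact h1)
      exact add_left_cancel h3
    have := congrArg (fun t => t + v) hp
    simpa [add_assoc] using this
  rw [← hs1, hs2]

private lemma sq15_uv (u : G) (r : G → G) (hu0 : (0:G) ≤ u) (hr : IsSquareRoot u r) :
    u + r 0 = r 0 + u := by
  obtain ⟨hv0, hvu, hvv, -⟩ := sq15_basic u r hu0 hr
  have hsq2 := hr.2.2.1
  have hle_v : ∀ y : G, 0 ≤ y → y ≤ u → y + -u + y ≤ 0 → y ≤ r 0 := by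
    intro y hy0 hyu h
    refine hsq2 0 y le_rfl hu0 hy0 hyu ?_
    rw [odot, sub_eq_add_neg]; exact sup_le h le_rfl
  have hvv' : r 0 + (-u + r 0) ≤ 0 := by rw [← add_assoc]; exact hvv
  have ha0 : (0:G) ≤ u + r 0 + -u := by
    have := add_le_add_left (add_le_add_right hv0 u) (-u); simpa [add_assoc] using this
  have hau : u + r 0 + -u ≤ u := by
    have := add_le_add_right (add_le_add_left hvu u) (-u); simpa [add_assoc] using this
  have hasq : (u + r 0 + -u) + -u + (u + r 0 + -u) ≤ 0 := by
    have e1 : (u + r 0 + -u) + -u + (u + r 0 + -u) = u + ((r 0 + (-u + r 0)) + -u) := by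
      simp only [add_assoc, neg_add_cancel_left]
    rw [e1]
    calc u + ((r 0 + (-u + r 0)) + -u) ≤ u + (0 + -u) := by
          exact add_le_add_right (add_le_add_left hvv' (-u)) u
      _ = 0 := by simp
  have hA : u + r 0 + -u ≤ r 0 := hle_v _ ha0 hau hasq
  have hle1 : u + r 0 ≤ r 0 + u := by
    have := add_le_add_left hA u; simpa [add_assoc] using this
  have hb0 : (0:G) ≤ -u + r 0 + u := by
    have := add_le_add_left (add_le_add_right hv0 (-u)) u; simpa [add_assoc] using this
  have hbu : -u + r 0 + u ≤ u := by
    have := add_le_add_right (add_le_add_left hvu (-u)) u; simpa [add_assoc] using this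
  have hbsq : (-u + r 0 + u) + -u + (-u + r 0 + u) ≤ 0 := by
    have e1 : (-u + r 0 + u) + -u + (-u + r 0 + u) = -u + ((r 0 + (-u + r 0)) + u) := by
      simp only [add_assoc, add_neg_cancel_left]
    rw [e1]
    calc -u + ((r 0 + (-u + r 0)) + u) ≤ -u + (0 + u) := by
          exact add_le_add_right (add_le_add_left hvv' u) (-u)
      _ = 0 := by simp
  have hB : -u + r 0 + u ≤ r 0 := hle_v _ hb0 hbu hbsq
  have hle2 : r 0 + u ≤ u + r 0 := by
    have := add_le_add_right hB u; simpa [add_assoc] using this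
  exact le_antisymm hle1 hle2

private lemma sq15_dzero (u : G) (r : G → G) (hu0 : (0:G) ≤ u) (hr : IsSquareRoot u r) :
    (u + -(r 0) + -(r 0)) ⊓ r 0 = 0 := by
  obtain ⟨hv0, hvu, hvv, hvvu⟩ := sq15_basic u r hu0 hr
  have hsq2 := hr.2.2.1
  have huv : u + r 0 = r 0 + u := sq15_uv u r hu0 hr
  set v := r 0 with hv
  set e := u + -v + -v with he
  have he0 : (0:G) ≤ e := by
    have h := add_le_add_left hvvu (-(v+v))
    rw [add_neg_cancel, neg_add_rev, ← add_assoc] at h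
    exact h
  have hu_eq : e + (v + v) = u := by
    rw [he]; simp only [add_assoc, neg_add_cancel_left, neg_add_cancel, add_zero]
  have hev : e + v = v + e := by
    have h1 : e + v = u + -v := by
      rw [he]; simp only [add_assoc, neg_add_cancel, add_zero]
    have h2 : v + e = u + -v := by
      calc v + e = (v + u) + (-v + -v) := by rw [he]; simp only [add_assoc]
        _ = (u + v) + (-v + -v) := by rw [huv]
        _ = u + -v := by simp only [add_assoc, add_neg_cancel_left]
    rw [h1, h2]
  set d := e ⊓ v with hd
  have hd0 : (0:G) ≤ d := le_inf he0 hv0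
  have hdv : d ≤ v := inf_le_right
  have hde : d ≤ e := inf_le_left
  have hdvc : d + v = v + d := by
    rw [hd, inf_add, add_inf, hev]
  have hdec : d + e = e + d := by
    rw [hd, inf_add, add_inf, hev]
  have hCdv : AddCommute d v := hdvc
  have hCde : AddCommute d e := hdec
  have hCdu : AddCommute d u := by
    have h := hCde.add_right (hCdv.add_right hCdv)
    rwa [hu_eq] at h
  have hCuv : AddCommute u v := huv
  have hCyu : AddCommute (v + d) u := hCuv.symm.add_left hCdu
  have hy0 : (0:G) ≤ v + d := by have := add_le_add hv0 hd0; simpa using this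
  have hyu : v + d ≤ u := (add_le_add_right hdv v).trans hvvu
  have hyin : (v + d) - u + (v + d) = (d + d) + -e := by
    have hswap : (v + d) + -u = -u + (v + d) := hCyu.neg_right
    have hC2 : AddCommute (d + d) (v + v) :=
      (hCdv.add_left hCdv).add_right (hCdv.add_left hCdv)
    have hnu : -u = -(v+v) + -e := by rw [← hu_eq, neg_add_rev]
    calc (v + d) - u + (v + d)
        = (v + d) + (-u + (v + d)) := by rw [sub_eq_add_neg, add_assoc]
      _ = (v + d) + ((v + d) + -u) := by rw [← hswap]
      _ = ((v + d) + (v + d)) + -u := by simp only [add_assoc]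
      _ = ((v + v) + (d + d)) + -u := by
            have h3 : (v + d) + (v + d) = (v + v) + (d + d) := by
              calc (v+d)+(v+d) = v + ((d + v) + d) := by simp only [add_assoc]
                _ = v + ((v + d) + d) := by rw [hdvc]
                _ = (v + v) + (d + d) := by simp only [add_assoc]
            rw [h3]
      _ = (d + d) + -e := by
            rw [hnu]
            calc ((v+v) + (d+d)) + (-(v+v) + -e)
                = (v+v) + (((d+d) + -(v+v)) + -e) := by simp only [add_assoc]
              _ = (v+v) + ((-(v+v) + (d+d)) + -e) := by rw [hC2.neg_right]
              _ = (d + d) + -e := by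
                    rw [← add_assoc, add_neg_cancel_left]
  have hX0 : (0:G) ≤ ((d+d) + -e) ⊔ 0 := le_sup_right
  have hXd : ((d+d) + -e) ⊔ 0 ≤ d := by
    refine sup_le ?_ hd0
    have h1 : d + -e ≤ 0 := by have := add_le_add_right hde (-e); simpa using this
    have h2 : d + (d + -e) ≤ d + 0 := add_le_add_right h1 d
    simpa [add_assoc] using h2
  have hXv : ((d+d) + -e) ⊔ 0 ≤ v := hXd.trans hdv
  obtain ⟨h, hh0, hhv, hhX, hrX⟩ := sq15_half u r hu0 hr _ hX0 hXv
  have hyle : v + d ≤ r (((d+d) + -e) ⊔ 0) := by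
    refine hsq2 _ (v + d) hX0 (hXv.trans hvu) hy0 hyu ?_
    rw [odot, hyin]
  have hdh : d ≤ h := by
    rw [hrX, ← hv] at hyle
    exact le_of_add_le_add_left hyle
  have hhz : h ≤ 0 := by
    have h1 : h + h ≤ h + 0 := by
      rw [add_zero, hhX]; exact hXd.trans hdh
    exact le_of_add_le_add_left h1
  have : d ≤ 0 := hdh.trans (le_antisymm hhz hh0 ▸ le_rfl)
  exact le_antisymm this hd0

private lemma sq15_add_eq_sup {x y : G} (hxy : x ⊓ y = 0) : x + y = y ⊔ x := by
  have h1 : x + -(x ⊓ y) + y = y ⊔ x := by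
    rw [neg_inf, add_sup, sup_add, add_neg_cancel, zero_add, neg_add_cancel_right]
  rw [hxy] at h1
  simpa using h1

private lemma sq15_comm_of_disjoint {x y : G} (hxy : x ⊓ y = 0) : x + y = y + x := by
  have h1 := sq15_add_eq_sup hxy
  have h2 := sq15_add_eq_sup (x := y) (y := x) (by rw [inf_comm, hxy])
  rw [h1, h2, sup_comm]

private lemma sq15_main {G : Type} [Lattice G] [AddGroup G]
    [CovariantClass G G (· + ·) (· ≤ ·)]
    [CovariantClass G G (Function.swap (· + ·)) (· ≤ ·)]
    (u : G) (hu0 : (0:G) ≤ u) (r : G → G) (hr : IsSquareRoot u r)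
    (x : G) (hx0 : 0 ≤ x) (hxu : x ≤ u) :
    odot u (r 0) x = odot u x (r 0) := by
  obtain ⟨hv0, hvu, hvv, hvvu⟩ := sq15_basic u r hu0 hr
  have huv : u + r 0 = r 0 + u := sq15_uv u r hu0 hr
  have hdz : (u + -(r 0) + -(r 0)) ⊓ (r 0) = 0 := sq15_dzero u r hu0 hr
  set v := r 0 with hv
  have hCuv : AddCommute u v := huv
  have hnv : -v ≤ 0 := by have := add_le_add_left hv0 (-v); simpa using this
  have hwu : u + -v ≤ u := by have := add_le_add_left hnv u; simpa using this
  set w := u + -v with hw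
  set y := x ⊔ w with hy
  have hyu : y ≤ u := sup_le hxu hwu
  set c := -y + u with hc
  have hc0 : (0:G) ≤ c := by
    rw [hc]; have := add_le_add_left hyu (-y); simpa using this
  have hwy : w ≤ y := le_sup_right
  have hcv : c ≤ v := by
    rw [hc]
    have h1 := add_le_add_left (sq15_neg_le hwy) u
    have h2 : -w + u = v := by
      rw [hw, neg_add_rev, neg_neg, add_assoc, neg_add_cancel, add_zero]
    rw [h2] at h1; exact h1
  have hccv : c + v = v + c := sq15_comm_v u r hu0 hr c hc0 hcv
  have hCcv : AddCommute c v := hccv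
  set e := u + -v + -v with he
  have he0 : (0:G) ≤ e := by
    have h := add_le_add_left hvvu (-(v+v))
    rw [add_neg_cancel, neg_add_rev, ← add_assoc] at h
    exact h
  have hu_eq : e + (v + v) = u := by
    rw [he]; simp only [add_assoc, neg_add_cancel_left, neg_add_cancel, add_zero]
  have hec : e ⊓ c = 0 :=
    le_antisymm ((inf_le_inf_left e hcv).trans_eq hdz) (le_inf he0 hc0)
  have hCec : AddCommute e c := sq15_comm_of_disjoint hec
  have hCcu : AddCommute c u := by
    have h := hCec.symm.add_right (hCcv.add_right hCcv)
    rwa [hu_eq] at h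
  have hCwc : AddCommute w c := by
    rw [hw]; exact hCcu.symm.add_left hCcv.symm.neg_left
  have hCwu : AddCommute w u := by
    rw [hw]; exact (AddCommute.refl u).add_left hCuv.symm.neg_left
  have hyeq : y = u + -c := by
    rw [hc, neg_add_rev, neg_neg, add_neg_cancel_left]
  have hCwy : AddCommute w y := by
    rw [hyeq]; exact hCwu.add_right hCwc.neg_right
  have hvmu : v + -u = -w := by rw [hw, neg_add_rev, neg_neg]
  have hmuv : -u + v = -w := by
    have h := (hCuv.neg_left).eq
    rw [h, hvmu]
  have hxw : x + -u + v = x + -w := by rw [add_assoc, hmuv]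
  rw [odot, odot]
  simp only [sub_eq_add_neg]
  calc (v + -u + x) ⊔ 0 = (-w + x) ⊔ 0 := by rw [hvmu]
    _ = -w + y := by rw [hy, add_sup, neg_add_cancel]
    _ = y + -w := (hCwy.symm.neg_right).eq.symm
    _ = (x + -w) ⊔ 0 := by rw [hy, sup_add, add_neg_cancel]
    _ = (x + -u + v) ⊔ 0 := by rw [hxw]

end SQ15


/-- `r(0) ⊙ x = x ⊙ r(0)` for every `x ∈ M`. -/
theorem stmt_15 {G : Type} [Lattice G] [AddGroup G]
    [CovariantClass G G (· + ·) (· ≤ ·)]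
    [CovariantClass G G (Function.swap (· + ·)) (· ≤ ·)]
    (u : G) (hu : IsStrongUnit u) (r : G → G) (hr : IsSquareRoot u r)
    (x : G) (hx0 : 0 ≤ x) (hxu : x ≤ u) :
    odot u (r 0) x = odot u x (r 0) :=
  sq15_main u hu.1 r hr x hx0 hxu
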